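/- Let α, β : ℤ → ℕ be finitely supported, let m = m(α−β) have D entries and n̂ = n̂(α+β) have N entries (as rearrangements defined below). Then D + α₀ + β₀ ≤ N, and componentwise (|m₁|, ..., |m_D|, 1, ..., 1) ≤ (n̂₁, ..., n̂_N) where 1 is repeated N − D times. -/

import Mathlib

open Set Real

/-- Multiset of indices of ℓ = α − β: each integer j repeated |α_j − β_j| times. -/
noncomputable def ellMultiset (α β : ℤ →₀ ℕ) : Multiset ℤ :=
  (α.support ∪ β.support).val.bind fun j =>
    Multiset.replicate ((α j : ℤ) - (β j : ℤ)).natAbs j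

/-- m(α−β): decreasing rearrangement (by absolute value) of the nonzero indices of
α−β with multiplicity |α_j − β_j|, recorded through their absolute values. -/
noncomputable def mList (α β : ℤ →₀ ℕ) : List ℕ :=
  ((((ellMultiset α β).filter (· ≠ (0:ℤ))).map Int.natAbs).sort (· ≤ ·)).reverse

/-- n̂(v): decreasing rearrangement of the multiset where each h > 1 is repeated
v_h + v_{−h} times and 1 is repeated v_1 + v_{−1} + v_0 times. -/
noncomputable def nList (v : ℤ →₀ ℕ) : List ℕ :=
  (((Finsupp.toMultiset v).map (fun j : ℤ => max 1 j.natAbs)).sort (· ≤ ·)).reverse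

namespace Stmt14Aux

open List

theorem auxE {b : ℕ} : ∀ {l₁ l₂ : List ℕ} {x : ℕ}, x ≤ b → List.Forall₂ (· ≤ ·) l₁ l₂ →
    List.Pairwise (· ≤ ·) (x :: l₁) →
    List.Forall₂ (· ≤ ·) (x :: l₁) (List.orderedInsert (· ≤ ·) b l₂) := by
  intro l₁ l₂ x hxb h hs
  induction h generalizing x with
  | nil => simpa using hxb
  | @cons p q l₁' l₂' hpq h' ih =>
    simp only [List.orderedInsert]
    split
    · exact Forall₂.cons hxb (Forall₂.cons hpq h')
    · rename_i hbq
      have hqb : q ≤ b := le_of_not_ge hbq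
      have hxp : x ≤ p := (List.rel_of_pairwise_cons hs) List.mem_cons_self
      exact Forall₂.cons (le_trans hxp hpq)
        (ih (le_trans hpq hqb) hs.of_cons)

theorem auxC {a : ℕ} : ∀ {l₁ l₂ : List ℕ} {y : ℕ}, a ≤ y → List.Forall₂ (· ≤ ·) l₁ l₂ →
    List.Pairwise (· ≤ ·) (y :: l₂) →
    List.Forall₂ (· ≤ ·) (List.orderedInsert (· ≤ ·) a l₁) (y :: l₂) := by
  intro l₁ l₂ y hay h hs
  induction h generalizing y with
  | nil => simpa using hay
  | @cons p q l₁' l₂' hpq h' ih =>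
    simp only [List.orderedInsert]
    split
    · exact Forall₂.cons hay (Forall₂.cons hpq h')
    · rename_i hap
      have hpa : p ≤ a := le_of_not_ge hap
      have hyq : y ≤ q := (List.rel_of_pairwise_cons hs) List.mem_cons_self
      exact Forall₂.cons (le_trans hpa hay) (ih (le_trans hay hyq) hs.of_cons)

theorem auxB {a b : ℕ} (hab : a ≤ b) : ∀ {l₁ l₂ : List ℕ}, List.Forall₂ (· ≤ ·) l₁ l₂ →
    List.Pairwise (· ≤ ·) l₁ → List.Pairwise (· ≤ ·) l₂ →
    List.Forall₂ (· ≤ ·) (List.orderedInsert (· ≤ ·) a l₁) (List.orderedInsert (· ≤ ·) b l₂) := by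
  intro l₁ l₂ h hs₁ hs₂
  induction h with
  | nil => simpa using hab
  | @cons p q l₁' l₂' hpq h' ih =>
    simp only [List.orderedInsert]
    split
    · split
      · exact Forall₂.cons hab (Forall₂.cons hpq h')
      · rename_i hap hbq
        have hqb : q ≤ b := le_of_not_ge hbq
        exact Forall₂.cons (le_trans hap hpq) (auxE (le_trans hpq hqb) h' hs₁)
    · split
      · rename_i hap hbq
        have hpa : p ≤ a := le_of_not_ge hap
        exact Forall₂.cons (le_trans hpa hab) (auxC (le_trans hab hbq) h' hs₂)
      · exact Forall₂.cons hpq (ih hs₁.of_cons hs₂.of_cons)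

theorem sort_cons_eq (a : ℕ) (s : Multiset ℕ) :
    Multiset.sort (a ::ₘ s) (· ≤ ·) = List.orderedInsert (· ≤ ·) a (Multiset.sort s (· ≤ ·)) := by
  apply List.Perm.eq_of_pairwise' (Multiset.pairwise_sort _ _)
    ((Multiset.pairwise_sort s _).orderedInsert a _) ?_
  refine Perm.trans ?_ (List.perm_orderedInsert _ a _).symm
  rw [← Multiset.coe_eq_coe, Multiset.sort_eq, ← Multiset.cons_coe, Multiset.sort_eq]

theorem auxA {s t : Multiset ℕ} (h : Multiset.Rel (· ≤ ·) s t) :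
    List.Forall₂ (· ≤ ·) (Multiset.sort s (· ≤ ·)) (Multiset.sort t (· ≤ ·)) := by
  induction h with
  | zero => simp
  | @cons a b s' t' hab h' ih =>
    rw [sort_cons_eq, sort_cons_eq]
    exact auxB hab ih (Multiset.pairwise_sort _ _) (Multiset.pairwise_sort _ _)

theorem rel_bind {m : Multiset ℤ} {f g : ℤ → Multiset ℕ}
    (h : ∀ j ∈ m, Multiset.Rel (· ≤ ·) (f j) (g j)) :
    Multiset.Rel (· ≤ ·) (m.bind f) (m.bind g) := by
  induction m using Multiset.induction with
  | empty => simp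
  | @cons a m ih =>
    rw [Multiset.cons_bind, Multiset.cons_bind]
    exact Multiset.Rel.add (h a (Multiset.mem_cons_self a m))
      (ih fun j hj => h j (Multiset.mem_cons_of_mem hj))

theorem filter_bind (m : Multiset ℤ) (f : ℤ → Multiset ℤ) (p : ℤ → Prop) [DecidablePred p] :
    (m.bind f).filter p = m.bind fun j => (f j).filter p := by
  induction m using Multiset.induction with
  | empty => simp
  | @cons a m ih => simp [Multiset.cons_bind, Multiset.filter_add, ih]

theorem toMultiset_eq_bind (v : ℤ →₀ ℕ) (u : Finset ℤ) (h : v.support ⊆ u) :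
    Finsupp.toMultiset v = u.val.bind fun j => Multiset.replicate (v j) j := by
  ext a
  rw [Finsupp.count_toMultiset, Multiset.count_bind]
  have h1 : (Multiset.map (fun j => (Multiset.replicate (v j) j).count a) u.val).sum
      = ∑ j ∈ u, if a = j then v j else 0 := by
    rw [Finset.sum]
    congr 1
    apply Multiset.map_congr rfl
    intro j _
    rw [Multiset.count_replicate]
    by_cases h : a = j
    · simp [h]
    · simp [h, Ne.symm h]
  rw [h1, Finset.sum_ite_eq]
  split
  · rfl
  · rename_i ha
    exact Finsupp.notMem_support_iff.mp fun hs => ha (h hs)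

end Stmt14Aux

open Stmt14Aux

/-- D + α₀ + β₀ ≤ N and componentwise
(|m₁|,…,|m_D|,1,…,1) ≤ (n̂₁,…,n̂_N), with 1 repeated N − D times. -/
theorem stmt14 (α β : ℤ →₀ ℕ) :
    (mList α β).length + α 0 + β 0 ≤ (nList (α + β)).length ∧
    List.Forall₂ (· ≤ ·)
      (mList α β ++ List.replicate ((nList (α + β)).length - (mList α β).length) 1)
      (nList (α + β)) := by
  set u : Finset ℤ := α.support ∪ β.support with hu
  set v : ℤ →₀ ℕ := α + β with hv
  set g : ℤ → ℕ := fun j => ((α j : ℤ) - (β j : ℤ)).natAbs with hg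
  set d : ℤ → ℕ := fun j => if j = 0 then 0 else g j with hd
  set M1 : Multiset ℕ := ((ellMultiset α β).filter (· ≠ (0:ℤ))).map Int.natAbs with hM1def
  set M2 : Multiset ℕ := (Finsupp.toMultiset v).map (fun j : ℤ => max 1 j.natAbs) with hM2def
  set K : ℕ := ∑ j ∈ u, (v j - d j) with hK
  have hvab : ∀ j, v j = α j + β j := fun j => Finsupp.add_apply α β j
  have hgv : ∀ j, g j ≤ v j := by
    intro j
    have := Int.natAbs_sub_le (α j : ℤ) (β j : ℤ)
    simpa [hg, hvab j] using this
  have hdv : ∀ j, d j ≤ v j := by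
    intro j
    by_cases hj : j = 0 <;> simp [hd, hj, hgv j]
  -- M1 as a bind
  have hM1 : M1 = u.val.bind fun j =>
      if j = 0 then 0 else Multiset.replicate (g j) j.natAbs := by
    rw [hM1def, ellMultiset, filter_bind, Multiset.map_bind]
    apply Multiset.bind_congr
    intro j _
    by_cases hj : j = 0
    · subst hj
      rw [Multiset.filter_eq_nil.mpr, Multiset.map_zero, if_pos rfl]
      intro a ha
      simp [Multiset.eq_of_mem_replicate ha]
    · rw [Multiset.filter_eq_self.mpr, Multiset.map_replicate, if_neg hj]
      intro a ha
      simpa [Multiset.eq_of_mem_replicate ha] using hj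
  -- M2 as a bind
  have hM2 : M2 = u.val.bind fun j => Multiset.replicate (v j) (max 1 j.natAbs) := by
    rw [hM2def, toMultiset_eq_bind v u (by rw [hv, hu]; exact Finsupp.support_add),
      Multiset.map_bind]
    apply Multiset.bind_congr
    intro j _
    rw [Multiset.map_replicate]
  -- cardinalities
  have hcard1 : Multiset.card M1 = ∑ j ∈ u, d j := by
    rw [hM1, Multiset.card_bind, Finset.sum]
    congr 1
    apply Multiset.map_congr rfl
    intro j _
    by_cases hj : j = 0 <;> simp [hd, hj]
  have hcard2 : Multiset.card M2 = ∑ j ∈ u, v j := by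
    rw [hM2, Multiset.card_bind, Finset.sum]
    congr 1
    apply Multiset.map_congr rfl
    intro j _
    simp
  have hsum : (∑ j ∈ u, d j) + K = ∑ j ∈ u, v j := by
    rw [hK, ← Finset.sum_add_distrib]
    apply Finset.sum_congr rfl
    intro j _
    have := hdv j
    omega
  -- the padding multiset
  have hpad : (u.val.bind fun j => Multiset.replicate (v j - d j) 1)
      = Multiset.replicate K 1 := by
    rw [Multiset.eq_replicate]
    constructor
    · rw [Multiset.card_bind, hK, Finset.sum]
      congr 1
      apply Multiset.map_congr rfl
      intro j _
      simp
    · intro b hb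
      obtain ⟨j, _, hb2⟩ := Multiset.mem_bind.mp hb
      exact Multiset.eq_of_mem_replicate hb2
  -- the relation
  have hrel : Multiset.Rel (· ≤ ·) (M1 + Multiset.replicate K 1) M2 := by
    rw [hM1, ← hpad, ← Multiset.bind_add, hM2]
    apply rel_bind
    intro j _
    rw [Multiset.rel_replicate_right]
    constructor
    · by_cases hj : j = 0 <;> simp [hd, hj, hdv j, Nat.add_sub_cancel' (hgv j)]
    · intro x hx
      rcases Multiset.mem_add.mp hx with hx | hx
      · by_cases hj : j = 0
        · simp [hj] at hx
        · rw [if_neg hj] at hx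
          rw [Multiset.eq_of_mem_replicate hx]
          exact le_max_right _ _
      · rw [Multiset.eq_of_mem_replicate hx]
        exact le_max_left _ _
  -- elements of M1 are positive
  have hM1pos : ∀ x ∈ M1, 1 ≤ x := by
    intro x hx
    rw [hM1def] at hx
    obtain ⟨j, hj, rfl⟩ := Multiset.mem_map.mp hx
    have hj0 : j ≠ 0 := by
      have := Multiset.of_mem_filter hj
      simpa using this
    exact Int.natAbs_pos.mpr hj0
  -- lengths
  have hlenm : (mList α β).length = Multiset.card M1 := by
    rw [mList, List.length_reverse, ← hM1def, Multiset.length_sort]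
  have hlenn : (nList v).length = Multiset.card M2 := by
    rw [nList, List.length_reverse, ← hM2def, Multiset.length_sort]
  have hv0 : v 0 ≤ K := by
    by_cases h0 : (0:ℤ) ∈ u
    · have := Finset.single_le_sum (f := fun j => v j - d j)
        (fun j _ => Nat.zero_le _) h0
      simpa [hd] using this
    · have hα : α 0 = 0 := Finsupp.notMem_support_iff.mp fun h => h0 (by
        rw [hu]; exact Finset.mem_union_left _ h)
      have hβ : β 0 = 0 := Finsupp.notMem_support_iff.mp fun h => h0 (by
        rw [hu]; exact Finset.mem_union_right _ h)
      simp [hvab 0, hα, hβ]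
  have hgoal1 : (mList α β).length + α 0 + β 0 ≤ (nList v).length := by
    rw [hlenm, hlenn, hcard1, hcard2]
    have := hvab 0
    omega
  refine ⟨hgoal1, ?_⟩
  have hNDK : (nList v).length - (mList α β).length = K := by
    rw [hlenm, hlenn, hcard1, hcard2]
    omega
  rw [hNDK]
  -- reduce to ascending sorted lists
  have hsorteq : Multiset.sort (M1 + Multiset.replicate K 1) (· ≤ ·)
      = List.replicate K 1 ++ Multiset.sort M1 (· ≤ ·) := by
    apply List.Perm.eq_of_pairwise' (Multiset.pairwise_sort _ _) ?_ ?_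
    · rw [List.pairwise_append]
      refine ⟨List.pairwise_replicate.mpr (Or.inr (le_refl 1)), Multiset.pairwise_sort _ _, ?_⟩
      intro x hx y hy
      rw [List.eq_of_mem_replicate hx]
      exact hM1pos y ((Multiset.mem_sort _).mp hy)
    · rw [← Multiset.coe_eq_coe, Multiset.sort_eq, ← Multiset.coe_add,
        Multiset.coe_replicate, Multiset.sort_eq, add_comm]
  have hF := auxA hrel
  rw [hsorteq] at hF
  have hF2 := List.forall₂_reverse_iff.mpr hF
  rw [List.reverse_append, List.reverse_replicate] at hF2
  rw [mList, nList]
  rw [← hM1def, ← hM2def]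
  exact hF2
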